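/- Let Ω := {(x,y,z) ∈ ℝ³ : x ≥ 0, y ≥ 0, 0 ≤ z ≤ √(xy)} and for p ≠ 0 define the one-homogeneous function F_p : Ω → ℝ by F_p(x,y,z) := ((x+y)/2) · ( (1+√(1−w²))^{1/p} + (1−√(1−w²))^{1/p} )^p where w := 2z/(x+y) for x+y > 0, and F_p(0,0,0) := 0. Then F_p is concave on Ω when p ∈ (0,1] ∪ [2,∞), and F_p is convex on Ω when p ∈ (−∞,0) ∪ (1,2). -/

import Mathlib

open Real Set

/-- The one-homogeneous function `F_p` on the cone `Ω = {x,y ≥ 0, 0 ≤ z ≤ √(xy)}`: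
`F_p(x,y,z) = ((x+y)/2) ((1+√(1-w²))^{1/p} + (1-√(1-w²))^{1/p})^p` with `w = 2z/(x+y)`,
`F_p(0,0,0) = 0`, and `F_p(x,y,0) = 0` for `p < 0` (the limiting value). -/
noncomputable def Fp (p : ℝ) (u : ℝ × ℝ × ℝ) : ℝ :=
  if u.1 + u.2.1 = 0 then 0
  else if p < 0 ∧ u.2.2 = 0 then 0
  else
    ((u.1 + u.2.1) / 2) *
      ((1 + Real.sqrt (1 - (2 * u.2.2 / (u.1 + u.2.1)) ^ 2)) ^ (1 / p) +
        (1 - Real.sqrt (1 - (2 * u.2.2 / (u.1 + u.2.1)) ^ 2)) ^ (1 / p)) ^ p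


lemma convexOn_sinh_Ici : ConvexOn ℝ (Ici (0:ℝ)) Real.sinh := by
  apply convexOn_of_deriv2_nonneg (convex_Ici 0) Real.continuous_sinh.continuousOn
    Real.differentiable_sinh.differentiableOn
  · rw [Real.deriv_sinh]; exact Real.differentiable_cosh.differentiableOn
  · intro x hx
    have h2 : deriv^[2] Real.sinh = Real.sinh := by
      ext y
      simp [Function.iterate_succ, Real.deriv_sinh, Real.deriv_cosh]
    rw [h2]
    rw [interior_Ici] at hx
    exact Real.sinh_nonneg_iff.2 (le_of_lt hx)

lemma sinh_mul_ge {d m : ℝ} (hd : 0 ≤ d) (hm : 1 ≤ m) :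
    m * Real.sinh d ≤ Real.sinh (m * d) := by
  have hm0 : 0 < m := lt_of_lt_of_le one_pos hm
  have ha : (0:ℝ) ≤ 1 - 1/m := by
    rw [sub_nonneg]; exact div_le_one_of_le₀ hm hm0.le
  have hb : (0:ℝ) ≤ 1/m := by positivity
  have h := convexOn_sinh_Ici.2 (mem_Ici.2 le_rfl) (mem_Ici.2 (mul_nonneg hm0.le hd))
    ha hb (by ring)
  simp only [smul_eq_mul, mul_zero, zero_add, Real.sinh_zero] at h
  have harg : 1/m * (m * d) = d := by field_simp
  rw [harg] at h
  calc m * Real.sinh d ≤ m * (1/m * Real.sinh (m*d)) := by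
        apply mul_le_mul_of_nonneg_left _ hm0.le
        linarith [h]
    _ = Real.sinh (m*d) := by field_simp

lemma sinh_mul_le {d m : ℝ} (hd : 0 ≤ d) (hm0 : 0 ≤ m) (hm1 : m ≤ 1) :
    Real.sinh (m * d) ≤ m * Real.sinh d := by
  have h := convexOn_sinh_Ici.2 (mem_Ici.2 le_rfl) (mem_Ici.2 hd)
    (by linarith : (0:ℝ) ≤ 1 - m) hm0 (by ring)
  simp only [smul_eq_mul, mul_zero, zero_add, Real.sinh_zero] at h
  linarith [h]

lemma key_exp_identity (a b m : ℝ) :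
    exp (a*m) - exp (b*m) - m * (exp a - exp b) * exp ((a+b)*((m-1)/2))
      = 2 * exp (m*((a+b)/2)) * (Real.sinh (m*((a-b)/2)) - m * Real.sinh ((a-b)/2)) := by
  have e1 : exp (a*m) = exp (m*((a+b)/2)) * exp (m*((a-b)/2)) := by
    rw [← Real.exp_add]; congr 1; ring
  have e2 : exp (b*m) = exp (m*((a+b)/2)) * exp (-(m*((a-b)/2))) := by
    rw [← Real.exp_add]; congr 1; ring
  have e3 : exp a * exp ((a+b)*((m-1)/2)) = exp (m*((a+b)/2)) * exp ((a-b)/2) := by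
    rw [← Real.exp_add, ← Real.exp_add]; congr 1; ring
  have e4 : exp b * exp ((a+b)*((m-1)/2)) = exp (m*((a+b)/2)) * exp (-((a-b)/2)) := by
    rw [← Real.exp_add, ← Real.exp_add]; congr 1; ring
  rw [Real.sinh_eq, Real.sinh_eq]
  linear_combination e1 - e2 - m*e3 + m*e4

lemma key_Q_identity {A B : ℝ} (m : ℝ) (hA : 0 < A) (hB : 0 < B) :
    A ^ m - B ^ m - m * (A - B) * (A*B) ^ ((m-1)/2)
      = 2 * exp (m * ((log A + log B)/2)) *
        (Real.sinh (m * ((log A - log B)/2)) - m * Real.sinh ((log A - log B)/2)) := by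
  rw [Real.rpow_def_of_pos hA, Real.rpow_def_of_pos hB, Real.rpow_def_of_pos (mul_pos hA hB),
      Real.log_mul hA.ne' hB.ne']
  have hAB : A - B = exp (log A) - exp (log B) := by rw [Real.exp_log hA, Real.exp_log hB]
  rw [hAB]
  exact key_exp_identity (log A) (log B) m

lemma sinh_cmp_ge {d m : ℝ} (hd : 0 ≤ d) (hm : 1 ≤ m ∨ (-1 ≤ m ∧ m ≤ 0)) :
    m * Real.sinh d ≤ Real.sinh (m * d) := by
  rcases hm with hm | ⟨hm1, hm2⟩
  · exact sinh_mul_ge hd hm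
  · have h := sinh_mul_le (m := -m) hd (by linarith) (by linarith)
    rw [show -m*d = -(m*d) by ring, Real.sinh_neg] at h
    linarith

lemma sinh_cmp_le {d m : ℝ} (hd : 0 ≤ d) (hm : (0 ≤ m ∧ m ≤ 1) ∨ m ≤ -1) :
    Real.sinh (m * d) ≤ m * Real.sinh d := by
  rcases hm with ⟨hm1, hm2⟩ | hm
  · exact sinh_mul_le hd hm1 hm2
  · have h := sinh_mul_ge (m := -m) hd (by linarith)
    rw [show -m*d = -(m*d) by ring, Real.sinh_neg] at h
    linarith

lemma key_ge {m A B : ℝ} (hB : 0 < B) (hBA : B ≤ A)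
    (hm : 1 ≤ m ∨ (-1 ≤ m ∧ m ≤ 0)) :
    m * (A - B) * (A*B) ^ ((m-1)/2) ≤ A ^ m - B ^ m := by
  have hA : 0 < A := lt_of_lt_of_le hB hBA
  have hd : 0 ≤ (log A - log B)/2 := by
    have := Real.log_le_log hB hBA; linarith
  have hs := sinh_cmp_ge hd hm
  have hid := key_Q_identity m hA hB
  nlinarith [Real.exp_pos (m * ((log A + log B)/2)), hs, hid]

lemma key_le {m A B : ℝ} (hB : 0 < B) (hBA : B ≤ A)
    (hm : (0 ≤ m ∧ m ≤ 1) ∨ m ≤ -1) :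
    A ^ m - B ^ m ≤ m * (A - B) * (A*B) ^ ((m-1)/2) := by
  have hA : 0 < A := lt_of_lt_of_le hB hBA
  have hd : 0 ≤ (log A - log B)/2 := by
    have := Real.log_le_log hB hBA; linarith
  have hs := sinh_cmp_le hd hm
  have hid := key_Q_identity m hA hB
  nlinarith [Real.exp_pos (m * ((log A + log B)/2)), hs, hid]

noncomputable def phiF (p : ℝ) : ℝ → ℝ := fun t =>
  ((1 + Real.sqrt (1 - 4*t^2)) ^ (1/p) + (1 - Real.sqrt (1 - 4*t^2)) ^ (1/p)) ^ p / 2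

noncomputable def phi (p : ℝ) : ℝ → ℝ := fun t =>
  if p < 0 ∧ t = 0 then 0 else phiF p t

noncomputable def gD (p : ℝ) : ℝ → ℝ := fun t =>
  -2*t / Real.sqrt (1 - 4*t^2) *
    ((1 + Real.sqrt (1 - 4*t^2)) ^ (1/p) + (1 - Real.sqrt (1 - 4*t^2)) ^ (1/p)) ^ (p-1) *
    ((1 + Real.sqrt (1 - 4*t^2)) ^ (1/p-1) - (1 - Real.sqrt (1 - 4*t^2)) ^ (1/p-1))

lemma basic_facts {t : ℝ} (ht : t ∈ Ioo (0:ℝ) (1/2)) :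
    0 < 1 - 4*t^2 ∧ 0 < Real.sqrt (1 - 4*t^2) ∧ Real.sqrt (1 - 4*t^2) < 1 ∧
      Real.sqrt (1 - 4*t^2) ^ 2 = 1 - 4*t^2 := by
  obtain ⟨ht0, ht1⟩ := ht
  have h4 : 0 < 1 - 4*t^2 := by nlinarith
  refine ⟨h4, Real.sqrt_pos.2 h4, ?_, Real.sq_sqrt h4.le⟩
  have : 1 - 4*t^2 < 1 := by nlinarith
  calc Real.sqrt (1 - 4*t^2) < Real.sqrt 1 := by
        exact Real.sqrt_lt_sqrt h4.le this
    _ = 1 := Real.sqrt_one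

lemma hasDerivAt_sqrt14 {t : ℝ} (ht : t ∈ Ioo (0:ℝ) (1/2)) :
    HasDerivAt (fun t => Real.sqrt (1 - 4*t^2))
      (-(4*t) / Real.sqrt (1 - 4*t^2)) t := by
  obtain ⟨h4, hs0, hs1, hsq⟩ := basic_facts ht
  have hinner : HasDerivAt (fun t : ℝ => 1 - 4*t^2) (-(8*t)) t := by
    have h := ((hasDerivAt_pow 2 t).const_mul (4:ℝ)).const_sub 1
    convert h using 1
    · rfl
    · rfl
    push_cast; ring
  have := hinner.sqrt (by positivity)
  convert this using 1
  rw [div_eq_div_iff hs0.ne' (by positivity)]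
  ring

lemma hasDerivAt_phiF {p t : ℝ} (hp : p ≠ 0) (ht : t ∈ Ioo (0:ℝ) (1/2)) :
    HasDerivAt (phiF p) (gD p t) t := by
  obtain ⟨h4, hs0, hs1, hsq⟩ := basic_facts ht
  set s := Real.sqrt (1 - 4*t^2) with hs
  have hS := hasDerivAt_sqrt14 ht
  have hA : HasDerivAt (fun t => 1 + Real.sqrt (1 - 4*t^2)) (-(4*t)/s) t := hS.const_add 1
  have hB : HasDerivAt (fun t => 1 - Real.sqrt (1 - 4*t^2)) (-(-(4*t)/s)) t := hS.const_sub 1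
  have hA0 : (1:ℝ) + s ≠ 0 := by positivity
  have hB0 : (1:ℝ) - s ≠ 0 := by linarith [hs1]
  have hAq := hA.rpow_const (p := 1/p) (Or.inl hA0)
  have hBq := hB.rpow_const (p := 1/p) (Or.inl hB0)
  have hN := hAq.add hBq
  have hN0 : (0:ℝ) < (1+s) ^ (1/p) + (1-s) ^ (1/p) := by
    have h1 : (0:ℝ) < (1+s) ^ (1/p) := Real.rpow_pos_of_pos (by positivity) _
    have h2 : (0:ℝ) < (1-s) ^ (1/p) := Real.rpow_pos_of_pos (by linarith) _
    linarith
  have hphi := (hN.rpow_const (p := p) (Or.inl hN0.ne')).div_const 2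
  convert hphi using 1
  · rfl
  · rfl
  · rfl
  simp only [Pi.add_apply]
  unfold gD
  rw [show (1/p - 1 : ℝ) = 1/p - 1 from rfl]
  rw [← hs]
  field_simp
  ring

noncomputable def G2 (p : ℝ) : ℝ → ℝ := fun t =>
  -(2 / Real.sqrt (1 - 4*t^2)^3) *
    ((1 + Real.sqrt (1 - 4*t^2)) ^ (1/p) + (1 - Real.sqrt (1 - 4*t^2)) ^ (1/p)) ^ (p-2) *
    ((1 + Real.sqrt (1 - 4*t^2)) ^ (2/p-1) - (1 - Real.sqrt (1 - 4*t^2)) ^ (2/p-1)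
      - (2/p-1) * (2*Real.sqrt (1 - 4*t^2)) *
        ((1 + Real.sqrt (1 - 4*t^2)) * (1 - Real.sqrt (1 - 4*t^2))) ^ (1/p-1))

lemma hasDerivAt_gD {p t : ℝ} (hp : p ≠ 0) (ht : t ∈ Ioo (0:ℝ) (1/2)) :
    HasDerivAt (gD p) (G2 p t) t := by
  obtain ⟨h4, hs0, hs1, hsq⟩ := basic_facts ht
  set s := Real.sqrt (1 - 4*t^2) with hsdef
  have hS := hasDerivAt_sqrt14 ht
  have hA : HasDerivAt (fun t => 1 + Real.sqrt (1 - 4*t^2)) (-(4*t)/s) t := hS.const_add 1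
  have hB : HasDerivAt (fun t => 1 - Real.sqrt (1 - 4*t^2)) (-(-(4*t)/s)) t := hS.const_sub 1
  have hApos : (0:ℝ) < 1 + s := by positivity
  have hBpos : (0:ℝ) < 1 - s := by linarith
  have hAq := hA.rpow_const (p := 1/p) (Or.inl hApos.ne')
  have hBq := hB.rpow_const (p := 1/p) (Or.inl hBpos.ne')
  have hN := hAq.add hBq
  have hN0 : (0:ℝ) < (1+s) ^ (1/p) + (1-s) ^ (1/p) := by
    have h1 : (0:ℝ) < (1+s) ^ (1/p) := Real.rpow_pos_of_pos hApos _
    have h2 : (0:ℝ) < (1-s) ^ (1/p) := Real.rpow_pos_of_pos hBpos _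
    linarith
  have hF1 : HasDerivAt (fun t : ℝ => -2*t / Real.sqrt (1 - 4*t^2))
      ((-2*1 * s - -2*t * (-(4*t)/s)) / s^2) t := by
    have hc : HasDerivAt (fun t : ℝ => -2*t) (-2*1) t := (hasDerivAt_id t).const_mul (-2)
    exact hc.div hS hs0.ne'
  have hF2 := hN.rpow_const (p := p-1) (Or.inl hN0.ne')
  have hF3 := (hA.rpow_const (p := 1/p - 1) (Or.inl hApos.ne')).sub
    (hB.rpow_const (p := 1/p - 1) (Or.inl hBpos.ne'))
  have hg := (hF1.mul hF2).mul hF3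
  convert hg using 1
  · rfl
  · rfl
  · rfl
  simp only [Pi.add_apply, Pi.sub_apply, Pi.mul_apply]
  -- now the value identity
  have ht2 : t^2 = (1 - s^2)/4 := by nlinarith [hsq]
  -- exponent normalizations
  have en1 : (p - 1) - 1 = p - 2 := by ring
  have en2 : (1/p - 1) - 1 = 1/p - 2 := by ring
  rw [en1, en2]
  -- rpow product identities
  have e_n : ((1+s)^(1/p) + (1-s)^(1/p)) ^ (p-1)
      = ((1+s)^(1/p) + (1-s)^(1/p)) ^ (p-2) * ((1+s)^(1/p) + (1-s)^(1/p)) := by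
    rw [show p - 1 = (p-2) + 1 by ring, Real.rpow_add_one hN0.ne']
  have e_am : (1+s) ^ (2/p-1) = (1+s)^(1/p) * (1+s)^(1/p-1) := by
    rw [← Real.rpow_add hApos]; congr 1; ring
  have e_bm : (1-s) ^ (2/p-1) = (1-s)^(1/p) * (1-s)^(1/p-1) := by
    rw [← Real.rpow_add hBpos]; congr 1; ring
  have e_ab : ((1+s) * (1-s)) ^ (1/p-1) = (1+s)^(1/p-1) * (1-s)^(1/p-1) :=
    Real.mul_rpow hApos.le hBpos.le
  have e_a1 : (1+s) ^ (1/p) = (1+s)^(1/p-1) * (1+s) := by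
    rw [← Real.rpow_add_one hApos.ne']; congr 1; ring
  have e_b1 : (1-s) ^ (1/p) = (1-s)^(1/p-1) * (1-s) := by
    rw [← Real.rpow_add_one hBpos.ne']; congr 1; ring
  have e_a3 : (1+s) ^ (1/p-2) = (1+s)^(1/p-1) / (1+s) := by
    rw [eq_div_iff hApos.ne', ← Real.rpow_add_one hApos.ne']; congr 1; ring
  have e_b3 : (1-s) ^ (1/p-2) = (1-s)^(1/p-1) / (1-s) := by
    rw [eq_div_iff hBpos.ne', ← Real.rpow_add_one hBpos.ne']; congr 1; ring
  unfold G2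
  rw [← hsdef]
  rw [e_n, e_am, e_bm, e_ab, e_a1, e_b1, e_a3, e_b3]
  field_simp
  ring_nf
  rw [ht2]
  ring

lemma G2_nonpos {p t : ℝ} (hp : p ∈ Ioc (0:ℝ) 1 ∪ Ici (2:ℝ)) (ht : t ∈ Ioo (0:ℝ) (1/2)) :
    G2 p t ≤ 0 := by
  have hp0 : 0 < p := by rcases hp with ⟨h1, _⟩ | h; exacts [h1, by linarith [mem_Ici.1 h]]
  obtain ⟨h4, hs0, hs1, hsq⟩ := basic_facts ht
  set s := Real.sqrt (1 - 4*t^2) with hsdef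
  have hApos : (0:ℝ) < 1 + s := by positivity
  have hBpos : (0:ℝ) < 1 - s := by linarith
  have hBA : 1 - s ≤ 1 + s := by linarith
  have hm : 1 ≤ 2/p - 1 ∨ (-1 ≤ 2/p - 1 ∧ 2/p - 1 ≤ 0) := by
    rcases hp with ⟨h1, h2⟩ | h
    · left
      rw [le_sub_iff_add_le, le_div_iff₀ hp0]
      linarith
    · right
      have h2 : (2:ℝ) ≤ p := mem_Ici.1 h
      constructor
      · have : 0 < 2/p := by positivity
        linarith
      · rw [sub_nonpos, div_le_one hp0]; exact h2
  have hkey := key_ge (m := 2/p - 1) hBpos hBA hm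
  rw [show ((2/p - 1) - 1)/2 = 1/p - 1 by ring] at hkey
  rw [show (1 + s) - (1 - s) = 2*s by ring] at hkey
  have hQ : 0 ≤ (1+s) ^ (2/p-1) - (1-s) ^ (2/p-1)
      - (2/p-1) * (2*s) * ((1 + s) * (1 - s)) ^ (1/p-1) := by linarith
  have hN0 : (0:ℝ) < (1+s) ^ (1/p) + (1-s) ^ (1/p) := by
    have h1 : (0:ℝ) < (1+s) ^ (1/p) := Real.rpow_pos_of_pos hApos _
    have h2 : (0:ℝ) < (1-s) ^ (1/p) := Real.rpow_pos_of_pos hBpos _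
    linarith
  have hN2 : (0:ℝ) < ((1+s) ^ (1/p) + (1-s) ^ (1/p)) ^ (p-2) := Real.rpow_pos_of_pos hN0 _
  have hpos : (0:ℝ) < 2 / s^3 := by positivity
  unfold G2
  rw [← hsdef]
  nlinarith [mul_nonneg (mul_nonneg hpos.le hN2.le) hQ]

lemma G2_nonneg {p t : ℝ} (hp : p ∈ Iio (0:ℝ) ∪ Ioo (1:ℝ) 2) (ht : t ∈ Ioo (0:ℝ) (1/2)) :
    0 ≤ G2 p t := by
  have hp0 : p ≠ 0 := by rcases hp with h | ⟨h1, _⟩; exacts [ne_of_lt h, by linarith]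
  obtain ⟨h4, hs0, hs1, hsq⟩ := basic_facts ht
  set s := Real.sqrt (1 - 4*t^2) with hsdef
  have hApos : (0:ℝ) < 1 + s := by positivity
  have hBpos : (0:ℝ) < 1 - s := by linarith
  have hBA : 1 - s ≤ 1 + s := by linarith
  have hm : (0 ≤ 2/p - 1 ∧ 2/p - 1 ≤ 1) ∨ 2/p - 1 ≤ -1 := by
    rcases hp with h | ⟨h1, h2⟩
    · right
      have hpn : p < 0 := h
      have : 2/p < 0 := div_neg_of_pos_of_neg two_pos hpn
      linarith
    · left
      have hp0' : 0 < p := by linarith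
      constructor
      · rw [sub_nonneg, le_div_iff₀ hp0']; linarith
      · rw [sub_le_iff_le_add, div_le_iff₀ hp0']; linarith
  have hkey := key_le (m := 2/p - 1) hBpos hBA hm
  rw [show ((2/p - 1) - 1)/2 = 1/p - 1 by ring] at hkey
  rw [show (1 + s) - (1 - s) = 2*s by ring] at hkey
  have hQ : (1+s) ^ (2/p-1) - (1-s) ^ (2/p-1)
      - (2/p-1) * (2*s) * ((1 + s) * (1 - s)) ^ (1/p-1) ≤ 0 := by linarith
  have hN0 : (0:ℝ) < (1+s) ^ (1/p) + (1-s) ^ (1/p) := by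
    have h1 : (0:ℝ) < (1+s) ^ (1/p) := Real.rpow_pos_of_pos hApos _
    have h2 : (0:ℝ) < (1-s) ^ (1/p) := Real.rpow_pos_of_pos hBpos _
    linarith
  have hN2 : (0:ℝ) < ((1+s) ^ (1/p) + (1-s) ^ (1/p)) ^ (p-2) := Real.rpow_pos_of_pos hN0 _
  have hpos : (0:ℝ) < 2 / s^3 := by positivity
  unfold G2
  rw [← hsdef]
  nlinarith [mul_nonneg (mul_nonneg hpos.le hN2.le) (neg_nonneg.2 hQ)]

lemma hasDerivAt_phi {p t : ℝ} (hp : p ≠ 0) (ht : t ∈ Ioo (0:ℝ) (1/2)) :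
    HasDerivAt (phi p) (gD p t) t := by
  apply (hasDerivAt_phiF hp ht).congr_of_eventuallyEq
  filter_upwards [eventually_ne_nhds (ne_of_gt ht.1)] with x hx
  simp [phi, hx]

lemma continuousOn_phi_pos {p : ℝ} (hp : 0 < p) :
    ContinuousOn (phi p) (Icc (0:ℝ) (1/2)) := by
  have hphi : phi p = phiF p := by
    funext t
    exact if_neg (fun h => absurd h.1 (not_lt.2 hp.le))
  rw [hphi]
  unfold phiF
  have hsq : ContinuousOn (fun t : ℝ => Real.sqrt (1 - 4*t^2)) (Icc 0 (1/2)) :=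
    (Real.continuous_sqrt.comp (by continuity)).continuousOn
  have hA : ContinuousOn (fun t : ℝ => (1 + Real.sqrt (1 - 4*t^2)) ^ (1/p)) (Icc 0 (1/2)) := by
    apply ContinuousOn.rpow_const (by fun_prop)
    intro x _
    left
    positivity
  have hB : ContinuousOn (fun t : ℝ => (1 - Real.sqrt (1 - 4*t^2)) ^ (1/p)) (Icc 0 (1/2)) := by
    apply ContinuousOn.rpow_const (by fun_prop)
    intro x _
    right
    positivity
  apply ContinuousOn.div_const
  apply ContinuousOn.rpow_const (hA.add hB)
  intro x hx
  left
  have h4 : (0:ℝ) ≤ 1 - 4*x^2 := by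
    obtain ⟨h1, h2⟩ := hx; nlinarith
  have h1 : (0:ℝ) < (1 + Real.sqrt (1 - 4*x^2)) ^ (1/p) :=
    Real.rpow_pos_of_pos (by positivity) _
  have h2 : (0:ℝ) ≤ (1 - Real.sqrt (1 - 4*x^2)) ^ (1/p) := by
    apply Real.rpow_nonneg
    have h := Real.sqrt_le_sqrt (show 1 - 4*x^2 ≤ 1 by nlinarith [sq_nonneg x])
    rw [Real.sqrt_one] at h
    linarith
  exact ne_of_gt (add_pos_of_pos_of_nonneg h1 h2)

lemma continuousOn_phi_neg {p : ℝ} (hp : p < 0) :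
    ContinuousOn (phi p) (Icc (0:ℝ) (1/2)) := by
  intro x hx
  rcases eq_or_ne x 0 with rfl | hx0
  · -- continuity at 0 : phi p 0 = 0 and phiF → 0
    have hval : phi p 0 = 0 := if_pos ⟨hp, rfl⟩
    rw [← continuousWithinAt_diff_self, ContinuousWithinAt, hval]
    have hEq : ∀ y ∈ Icc (0:ℝ) (1/2) \ {0}, phi p y = phiF p y := by
      intro y hy
      exact if_neg (fun h => absurd h.2 hy.2)
    apply Filter.Tendsto.congr' (Filter.eventuallyEq_of_mem self_mem_nhdsWithin
      (fun y hy => (hEq y hy).symm))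
    -- show Tendsto phiF (𝓝[Icc 0 (1/2) \ {0}] 0) (nhds 0)
    have hBtend : Filter.Tendsto (fun t : ℝ => 1 - Real.sqrt (1 - 4*t^2))
        (nhdsWithin 0 (Icc (0:ℝ) (1/2) \ {0})) (nhdsWithin 0 (Ioi 0)) := by
      rw [tendsto_nhdsWithin_iff]
      constructor
      · have hc : Continuous (fun t : ℝ => 1 - Real.sqrt (1 - 4*t^2)) := by
          exact continuous_const.sub (Real.continuous_sqrt.comp (by continuity))
        have := hc.tendsto 0
        convert this.mono_left nhdsWithin_le_nhds using 2
        norm_num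
      · filter_upwards [self_mem_nhdsWithin] with y hy
        obtain ⟨⟨hy0, hy1⟩, hyne⟩ := hy
        have hy0' : 0 < y := lt_of_le_of_ne hy0 (Ne.symm hyne)
        have h4 : 1 - 4*y^2 < 1 := by nlinarith
        have h40 : 0 ≤ 1 - 4*y^2 := by nlinarith
        have : Real.sqrt (1 - 4*y^2) < 1 := by
          calc Real.sqrt (1 - 4*y^2) < Real.sqrt 1 := Real.sqrt_lt_sqrt h40 h4
            _ = 1 := Real.sqrt_one
        exact mem_Ioi.2 (by linarith)
    have hq : (0:ℝ) < -(1/p) := by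
      rw [neg_pos]
      exact div_neg_of_pos_of_neg one_pos hp
    have hrtend : Filter.Tendsto (fun y : ℝ => y ^ (1/p)) (nhdsWithin 0 (Ioi 0)) Filter.atTop := by
      have h1 : Filter.Tendsto (fun y : ℝ => (y⁻¹) ^ (-(1/p))) (nhdsWithin 0 (Ioi 0))
          Filter.atTop := (tendsto_rpow_atTop hq).comp tendsto_inv_nhdsGT_zero
      apply h1.congr'
      filter_upwards [self_mem_nhdsWithin] with y hy
      rw [Real.inv_rpow (le_of_lt hy), Real.rpow_neg (le_of_lt hy), inv_inv]
    have hBq : Filter.Tendsto (fun t : ℝ => (1 - Real.sqrt (1 - 4*t^2)) ^ (1/p))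
        (nhdsWithin 0 (Icc (0:ℝ) (1/2) \ {0})) Filter.atTop := hrtend.comp hBtend
    have hNtend : Filter.Tendsto (fun t : ℝ =>
        (1 + Real.sqrt (1 - 4*t^2)) ^ (1/p) + (1 - Real.sqrt (1 - 4*t^2)) ^ (1/p))
        (nhdsWithin 0 (Icc (0:ℝ) (1/2) \ {0})) Filter.atTop := by
      apply Filter.tendsto_atTop_mono _ hBq
      intro y
      have : (0:ℝ) ≤ (1 + Real.sqrt (1 - 4*y^2)) ^ (1/p) := Real.rpow_nonneg (by positivity) _
      linarith
    have houter : Filter.Tendsto (fun y : ℝ => y ^ p) Filter.atTop (nhds 0) := by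
      have := tendsto_rpow_neg_atTop (y := -p) (by linarith)
      simpa using this
    have hfin := (houter.comp hNtend).div_const 2
    rw [zero_div] at hfin
    refine Filter.Tendsto.congr' ?_ hfin
    filter_upwards [self_mem_nhdsWithin] with y hy
    rfl
  · -- x ≠ 0 : continuity of the explicit formula
    have hx0' : 0 < x := lt_of_le_of_ne hx.1 (Ne.symm hx0)
    have h4 : 0 ≤ 1 - 4*x^2 := by obtain ⟨h1, h2⟩ := hx; nlinarith
    have hs1 : Real.sqrt (1 - 4*x^2) < 1 := by
      calc Real.sqrt (1 - 4*x^2) < Real.sqrt 1 := Real.sqrt_lt_sqrt h4 (by nlinarith)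
        _ = 1 := Real.sqrt_one
    have hca : ContinuousAt (phiF p) x := by
      unfold phiF
      have hsc : ContinuousAt (fun t : ℝ => Real.sqrt (1 - 4*t^2)) x :=
        (Real.continuous_sqrt.comp (by continuity)).continuousAt
      have hA : ContinuousAt (fun t : ℝ => (1 + Real.sqrt (1 - 4*t^2)) ^ (1/p)) x :=
        ContinuousAt.rpow_const (by fun_prop) (Or.inl (by positivity))
      have hB : ContinuousAt (fun t : ℝ => (1 - Real.sqrt (1 - 4*t^2)) ^ (1/p)) x :=
        ContinuousAt.rpow_const (by fun_prop) (Or.inl (by linarith))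
      have hN0 : (0:ℝ) < (1 + Real.sqrt (1 - 4*x^2)) ^ (1/p)
          + (1 - Real.sqrt (1 - 4*x^2)) ^ (1/p) := by
        have h1 : (0:ℝ) < (1 + Real.sqrt (1 - 4*x^2)) ^ (1/p) :=
          Real.rpow_pos_of_pos (by positivity) _
        have h2 : (0:ℝ) < (1 - Real.sqrt (1 - 4*x^2)) ^ (1/p) :=
          Real.rpow_pos_of_pos (by linarith) _
        linarith
      exact (ContinuousAt.rpow_const (hA.add hB) (Or.inl hN0.ne')).div_const 2
    have : ContinuousAt (phi p) x := by
      apply hca.congr_of_eventuallyEq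
      filter_upwards [eventually_ne_nhds hx0] with y hy
      exact if_neg (fun h => absurd h.2 hy)
    exact this.continuousWithinAt

lemma deriv2_phi_eq {p x : ℝ} (hpne : p ≠ 0) (hx : x ∈ Ioo (0:ℝ) (1/2)) :
    deriv^[2] (phi p) x = G2 p x := by
  have hev : deriv (phi p) =ᶠ[nhds x] gD p := by
    filter_upwards [isOpen_Ioo.mem_nhds hx] with y hy
    exact (hasDerivAt_phi hpne hy).deriv
  simp only [Function.iterate_succ_apply', Function.iterate_zero_apply]
  rw [Filter.EventuallyEq.deriv_eq hev]
  exact (hasDerivAt_gD hpne hx).deriv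

lemma deriv_phi_diffble {p : ℝ} (hpne : p ≠ 0) :
    DifferentiableOn ℝ (deriv (phi p)) (Ioo (0:ℝ) (1/2)) := by
  intro x hx
  apply DifferentiableAt.differentiableWithinAt
  have hgd : DifferentiableAt ℝ (gD p) x := (hasDerivAt_gD hpne hx).differentiableAt
  have hev : deriv (phi p) =ᶠ[nhds x] gD p := by
    filter_upwards [isOpen_Ioo.mem_nhds hx] with y hy
    exact (hasDerivAt_phi hpne hy).deriv
  rw [Filter.EventuallyEq.differentiableAt_iff hev]
  exact hgd

lemma phi_diffble {p : ℝ} (hpne : p ≠ 0) :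
    DifferentiableOn ℝ (phi p) (Ioo (0:ℝ) (1/2)) := fun x hx =>
  (hasDerivAt_phi hpne hx).differentiableAt.differentiableWithinAt

lemma phi_concaveOn {p : ℝ} (hp : p ∈ Ioc (0:ℝ) 1 ∪ Ici (2:ℝ)) :
    ConcaveOn ℝ (Icc (0:ℝ) (1/2)) (phi p) := by
  have hp0 : 0 < p := by rcases hp with ⟨h1, _⟩ | h; exacts [h1, by linarith [mem_Ici.1 h]]
  apply concaveOn_of_deriv2_nonpos (convex_Icc _ _) (continuousOn_phi_pos hp0)
  · rw [interior_Icc]; exact phi_diffble hp0.ne'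
  · rw [interior_Icc]; exact deriv_phi_diffble hp0.ne'
  · rw [interior_Icc]
    intro x hx
    rw [deriv2_phi_eq hp0.ne' hx]
    exact G2_nonpos hp hx

lemma phi_convexOn {p : ℝ} (hp : p ∈ Iio (0:ℝ) ∪ Ioo (1:ℝ) 2) :
    ConvexOn ℝ (Icc (0:ℝ) (1/2)) (phi p) := by
  have hpne : p ≠ 0 := by rcases hp with h | ⟨h1, _⟩; exacts [ne_of_lt h, by linarith]
  have hcont : ContinuousOn (phi p) (Icc (0:ℝ) (1/2)) := by
    rcases hp with h | ⟨h1, _⟩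
    · exact continuousOn_phi_neg h
    · exact continuousOn_phi_pos (by linarith)
  apply convexOn_of_deriv2_nonneg (convex_Icc _ _) hcont
  · rw [interior_Icc]; exact phi_diffble hpne
  · rw [interior_Icc]; exact deriv_phi_diffble hpne
  · rw [interior_Icc]
    intro x hx
    rw [deriv2_phi_eq hpne hx]
    exact G2_nonneg hp hx

lemma Fp_eq {p : ℝ} {u : ℝ × ℝ × ℝ} (h : 0 < u.1 + u.2.1) :
    Fp p u = (u.1 + u.2.1) * phi p (u.2.2 / (u.1 + u.2.1)) := by
  unfold Fp phi phiF
  rw [if_neg h.ne']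
  have hzz : (u.2.2 / (u.1 + u.2.1) = 0) ↔ (u.2.2 = 0) := by
    rw [div_eq_zero_iff]
    simp [h.ne']
  have hform : 1 - (2 * u.2.2 / (u.1 + u.2.1)) ^ 2 = 1 - 4*(u.2.2 / (u.1 + u.2.1))^2 := by
    rw [mul_div_assoc, mul_pow]
    norm_num
  by_cases hc : p < 0 ∧ u.2.2 = 0
  · rw [if_pos hc, if_pos ⟨hc.1, hzz.2 hc.2⟩, mul_zero]
  · have hc' : ¬(p < 0 ∧ u.2.2 / (u.1 + u.2.1) = 0) := fun h' => hc ⟨h'.1, hzz.1 h'.2⟩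
    rw [if_neg hc, if_neg hc', hform]
    ring

lemma Fp_smul {p c : ℝ} {u : ℝ × ℝ × ℝ} (hc : 0 < c) (hs : 0 < u.1 + u.2.1) :
    Fp p (c • u) = c * Fp p u := by
  have h1 : (c • u).1 = c * u.1 := rfl
  have h2 : (c • u).2.1 = c * u.2.1 := rfl
  have h3 : (c • u).2.2 = c * u.2.2 := rfl
  have hs2 : 0 < (c • u).1 + (c • u).2.1 := by
    rw [h1, h2, ← mul_add]; positivity
  rw [Fp_eq hs2, Fp_eq hs, h1, h2, h3]
  rw [show c * u.1 + c * u.2.1 = c * (u.1 + u.2.1) by ring,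
      mul_div_mul_left _ _ hc.ne']
  ring

lemma mem_Icc_of_mem_cone {u : ℝ × ℝ × ℝ}
    (hu : 0 ≤ u.1 ∧ 0 ≤ u.2.1 ∧ 0 ≤ u.2.2 ∧ u.2.2 ≤ Real.sqrt (u.1 * u.2.1))
    (hs : 0 < u.1 + u.2.1) : u.2.2 / (u.1 + u.2.1) ∈ Icc (0:ℝ) (1/2) := by
  obtain ⟨hx, hy, hz, hzs⟩ := hu
  constructor
  · exact div_nonneg hz hs.le
  · rw [div_le_iff₀ hs]
    have hgm : Real.sqrt (u.1 * u.2.1) ≤ (u.1 + u.2.1)/2 := by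
      have h1 : Real.sqrt (u.1 * u.2.1) ≤ Real.sqrt (((u.1 + u.2.1)/2)^2) :=
        Real.sqrt_le_sqrt (by nlinarith [sq_nonneg (u.1 - u.2.1)])
      rwa [Real.sqrt_sq (by positivity)] at h1
    linarith

lemma apex_eq {u : ℝ × ℝ × ℝ}
    (hu : 0 ≤ u.1 ∧ 0 ≤ u.2.1 ∧ 0 ≤ u.2.2 ∧ u.2.2 ≤ Real.sqrt (u.1 * u.2.1))
    (hs : u.1 + u.2.1 = 0) : u = 0 := by
  obtain ⟨hx, hy, hz, hzs⟩ := hu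
  have hx0 : u.1 = 0 := by linarith
  have hy0 : u.2.1 = 0 := by linarith
  have hz0 : u.2.2 = 0 := by
    have : Real.sqrt (u.1 * u.2.1) = 0 := by rw [hx0, hy0, mul_zero, Real.sqrt_zero]
    linarith [hzs, this ▸ hzs]
  have : u = (u.1, u.2.1, u.2.2) := rfl
  rw [this, hx0, hy0, hz0]
  rfl

lemma Fp_zero (p : ℝ) : Fp p 0 = 0 := by
  unfold Fp
  norm_num

lemma convex_cone :
    Convex ℝ {u : ℝ × ℝ × ℝ |
      0 ≤ u.1 ∧ 0 ≤ u.2.1 ∧ 0 ≤ u.2.2 ∧ u.2.2 ≤ Real.sqrt (u.1 * u.2.1)} := by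
  intro u hu v hv a b ha hb hab
  obtain ⟨hux, huy, huz, hus⟩ := hu
  obtain ⟨hvx, hvy, hvz, hvs⟩ := hv
  have h1 : (a • u + b • v).1 = a * u.1 + b * v.1 := rfl
  have h2 : (a • u + b • v).2.1 = a * u.2.1 + b * v.2.1 := rfl
  have h3 : (a • u + b • v).2.2 = a * u.2.2 + b * v.2.2 := rfl
  refine ⟨by rw [h1]; positivity, by rw [h2]; positivity, by rw [h3]; positivity, ?_⟩
  rw [h1, h2, h3]
  -- a z_u + b z_v ≤ √((a x_u + b x_v)(a y_u + b y_v))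
  have su := Real.sq_sqrt (mul_nonneg hux huy)
  have sv := Real.sq_sqrt (mul_nonneg hvx hvy)
  have snu := Real.sqrt_nonneg (u.1 * u.2.1)
  have snv := Real.sqrt_nonneg (v.1 * v.2.1)
  have key : a * Real.sqrt (u.1 * u.2.1) + b * Real.sqrt (v.1 * v.2.1) ≤
      Real.sqrt ((a * u.1 + b * v.1) * (a * u.2.1 + b * v.2.1)) := by
    have hsq : (a * Real.sqrt (u.1 * u.2.1) + b * Real.sqrt (v.1 * v.2.1))^2 ≤
        (a * u.1 + b * v.1) * (a * u.2.1 + b * v.2.1) := by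
      have cross : Real.sqrt (u.1 * u.2.1) * Real.sqrt (v.1 * v.2.1)
          = Real.sqrt (u.1 * v.2.1) * Real.sqrt (v.1 * u.2.1) := by
        rw [← Real.sqrt_mul (mul_nonneg hux huy), ← Real.sqrt_mul (mul_nonneg hux hvy)]
        congr 1
        ring
      have c1 := Real.sq_sqrt (mul_nonneg hux hvy)
      have c2 := Real.sq_sqrt (mul_nonneg hvx huy)
      have amgm : 2 * (Real.sqrt (u.1 * v.2.1) * Real.sqrt (v.1 * u.2.1)) ≤
          u.1 * v.2.1 + v.1 * u.2.1 := by
        nlinarith [sq_nonneg (Real.sqrt (u.1 * v.2.1) - Real.sqrt (v.1 * u.2.1))]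
      have hcross2 := mul_le_mul_of_nonneg_left amgm (mul_nonneg ha hb)
      calc (a * Real.sqrt (u.1 * u.2.1) + b * Real.sqrt (v.1 * v.2.1))^2
          = a^2 * (Real.sqrt (u.1 * u.2.1)^2) +
            2*a*b*(Real.sqrt (u.1 * u.2.1) * Real.sqrt (v.1 * v.2.1)) +
            b^2 * (Real.sqrt (v.1 * v.2.1)^2) := by ring
        _ = a^2 * (u.1 * u.2.1) +
            2*a*b*(Real.sqrt (u.1 * v.2.1) * Real.sqrt (v.1 * u.2.1)) +
            b^2 * (v.1 * v.2.1) := by rw [su, sv, cross]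
        _ ≤ a^2 * (u.1 * u.2.1) + a*b*(u.1 * v.2.1 + v.1 * u.2.1) +
            b^2 * (v.1 * v.2.1) := by linarith [hcross2]
        _ = (a * u.1 + b * v.1) * (a * u.2.1 + b * v.2.1) := by ring
    have := Real.sqrt_le_sqrt hsq
    rwa [Real.sqrt_sq (by positivity)] at this
  have step1 : a * u.2.2 + b * v.2.2 ≤
      a * Real.sqrt (u.1 * u.2.1) + b * Real.sqrt (v.1 * v.2.1) := by
    have := mul_le_mul_of_nonneg_left hus ha
    have := mul_le_mul_of_nonneg_left hvs hb
    linarith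
  linarith

lemma main_concave {p : ℝ} (hφ : ConcaveOn ℝ (Icc (0:ℝ) (1/2)) (phi p)) :
    ConcaveOn ℝ {u : ℝ × ℝ × ℝ |
      0 ≤ u.1 ∧ 0 ≤ u.2.1 ∧ 0 ≤ u.2.2 ∧ u.2.2 ≤ Real.sqrt (u.1 * u.2.1)} (Fp p) := by
  refine ⟨convex_cone, ?_⟩
  intro u hu v hv a b ha hb hab
  simp only [mem_setOf_eq] at hu hv
  simp only [smul_eq_mul]
  by_cases haz : a = 0
  · subst haz
    have hb1 : b = 1 := by linarith
    subst hb1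
    simp
  by_cases hbz : b = 0
  · subst hbz
    have ha1 : a = 1 := by linarith
    subst ha1
    simp
  have ha0 : 0 < a := lt_of_le_of_ne ha (Ne.symm haz)
  have hb0 : 0 < b := lt_of_le_of_ne hb (Ne.symm hbz)
  have h1 : (a • u + b • v).1 = a * u.1 + b * v.1 := rfl
  have h2 : (a • u + b • v).2.1 = a * u.2.1 + b * v.2.1 := rfl
  have h3 : (a • u + b • v).2.2 = a * u.2.2 + b * v.2.2 := rfl
  rcases eq_or_lt_of_le (by linarith [hu.1, hu.2.1] : 0 ≤ u.1 + u.2.1) with hsu | hsu0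
  · -- u is the apex
    have hu0 : u = 0 := apex_eq hu hsu.symm
    subst hu0
    rcases eq_or_lt_of_le (by linarith [hv.1, hv.2.1] : 0 ≤ v.1 + v.2.1) with hsv | hsv0
    · have hv0 : v = 0 := apex_eq hv hsv.symm
      subst hv0
      simp [Fp_zero]
    · have hcomb : a • (0 : ℝ × ℝ × ℝ) + b • v = b • v := by simp
      rw [hcomb, Fp_smul hb0 hsv0, Fp_zero]
      simp
  rcases eq_or_lt_of_le (by linarith [hv.1, hv.2.1] : 0 ≤ v.1 + v.2.1) with hsv | hsv0
  · have hv0 : v = 0 := apex_eq hv hsv.symm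
    subst hv0
    have hcomb : a • u + b • (0 : ℝ × ℝ × ℝ) = a • u := by simp
    rw [hcomb, Fp_smul ha0 hsu0, Fp_zero]
    simp
  -- main case
  have htu := mem_Icc_of_mem_cone hu hsu0
  have htv := mem_Icc_of_mem_cone hv hsv0
  have hS : 0 < a * (u.1 + u.2.1) + b * (v.1 + v.2.1) :=
    add_pos (mul_pos ha0 hsu0) (mul_pos hb0 hsv0)
  have hsw : 0 < (a • u + b • v).1 + (a • u + b • v).2.1 := by
    rw [h1, h2]; linarith [hS]
  have hθ0 : 0 ≤ a * (u.1 + u.2.1) / (a * (u.1 + u.2.1) + b * (v.1 + v.2.1)) := by positivity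
  have hμ0 : 0 ≤ b * (v.1 + v.2.1) / (a * (u.1 + u.2.1) + b * (v.1 + v.2.1)) := by positivity
  have hsum : a * (u.1 + u.2.1) / (a * (u.1 + u.2.1) + b * (v.1 + v.2.1))
      + b * (v.1 + v.2.1) / (a * (u.1 + u.2.1) + b * (v.1 + v.2.1)) = 1 := by
    field_simp
  have key := hφ.2 htu htv hθ0 hμ0 hsum
  simp only [smul_eq_mul] at key
  rw [Fp_eq hsw, Fp_eq hsu0, Fp_eq hsv0, h1, h2, h3]
  rw [show (a * u.1 + b * v.1) + (a * u.2.1 + b * v.2.1)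
      = a * (u.1 + u.2.1) + b * (v.1 + v.2.1) by ring]
  have harg : (a * u.2.2 + b * v.2.2) / (a * (u.1 + u.2.1) + b * (v.1 + v.2.1))
      = a * (u.1 + u.2.1) / (a * (u.1 + u.2.1) + b * (v.1 + v.2.1)) * (u.2.2 / (u.1 + u.2.1))
      + b * (v.1 + v.2.1) / (a * (u.1 + u.2.1) + b * (v.1 + v.2.1)) * (v.2.2 / (v.1 + v.2.1)) := by
    field_simp
  rw [harg]
  have hmul := mul_le_mul_of_nonneg_left key hS.le
  have heq : a * ((u.1 + u.2.1) * phi p (u.2.2 / (u.1 + u.2.1)))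
      + b * ((v.1 + v.2.1) * phi p (v.2.2 / (v.1 + v.2.1)))
      = (a * (u.1 + u.2.1) + b * (v.1 + v.2.1)) *
        (a * (u.1 + u.2.1) / (a * (u.1 + u.2.1) + b * (v.1 + v.2.1)) * phi p (u.2.2 / (u.1 + u.2.1))
        + b * (v.1 + v.2.1) / (a * (u.1 + u.2.1) + b * (v.1 + v.2.1)) * phi p (v.2.2 / (v.1 + v.2.1))) := by
    field_simp
  linarith [hmul, heq]

lemma main_convex {p : ℝ} (hφ : ConvexOn ℝ (Icc (0:ℝ) (1/2)) (phi p)) :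
    ConvexOn ℝ {u : ℝ × ℝ × ℝ |
      0 ≤ u.1 ∧ 0 ≤ u.2.1 ∧ 0 ≤ u.2.2 ∧ u.2.2 ≤ Real.sqrt (u.1 * u.2.1)} (Fp p) := by
  refine ⟨convex_cone, ?_⟩
  intro u hu v hv a b ha hb hab
  simp only [mem_setOf_eq] at hu hv
  simp only [smul_eq_mul]
  by_cases haz : a = 0
  · subst haz
    have hb1 : b = 1 := by linarith
    subst hb1
    simp
  by_cases hbz : b = 0
  · subst hbz
    have ha1 : a = 1 := by linarith
    subst ha1
    simp
  have ha0 : 0 < a := lt_of_le_of_ne ha (Ne.symm haz)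
  have hb0 : 0 < b := lt_of_le_of_ne hb (Ne.symm hbz)
  have h1 : (a • u + b • v).1 = a * u.1 + b * v.1 := rfl
  have h2 : (a • u + b • v).2.1 = a * u.2.1 + b * v.2.1 := rfl
  have h3 : (a • u + b • v).2.2 = a * u.2.2 + b * v.2.2 := rfl
  rcases eq_or_lt_of_le (by linarith [hu.1, hu.2.1] : 0 ≤ u.1 + u.2.1) with hsu | hsu0
  · have hu0 : u = 0 := apex_eq hu hsu.symm
    subst hu0
    rcases eq_or_lt_of_le (by linarith [hv.1, hv.2.1] : 0 ≤ v.1 + v.2.1) with hsv | hsv0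
    · have hv0 : v = 0 := apex_eq hv hsv.symm
      subst hv0
      simp [Fp_zero]
    · have hcomb : a • (0 : ℝ × ℝ × ℝ) + b • v = b • v := by simp
      rw [hcomb, Fp_smul hb0 hsv0, Fp_zero]
      simp
  rcases eq_or_lt_of_le (by linarith [hv.1, hv.2.1] : 0 ≤ v.1 + v.2.1) with hsv | hsv0
  · have hv0 : v = 0 := apex_eq hv hsv.symm
    subst hv0
    have hcomb : a • u + b • (0 : ℝ × ℝ × ℝ) = a • u := by simp
    rw [hcomb, Fp_smul ha0 hsu0, Fp_zero]
    simp
  have htu := mem_Icc_of_mem_cone hu hsu0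
  have htv := mem_Icc_of_mem_cone hv hsv0
  have hS : 0 < a * (u.1 + u.2.1) + b * (v.1 + v.2.1) :=
    add_pos (mul_pos ha0 hsu0) (mul_pos hb0 hsv0)
  have hsw : 0 < (a • u + b • v).1 + (a • u + b • v).2.1 := by
    rw [h1, h2]; linarith [hS]
  have hθ0 : 0 ≤ a * (u.1 + u.2.1) / (a * (u.1 + u.2.1) + b * (v.1 + v.2.1)) := by positivity
  have hμ0 : 0 ≤ b * (v.1 + v.2.1) / (a * (u.1 + u.2.1) + b * (v.1 + v.2.1)) := by positivity
  have hsum : a * (u.1 + u.2.1) / (a * (u.1 + u.2.1) + b * (v.1 + v.2.1))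
      + b * (v.1 + v.2.1) / (a * (u.1 + u.2.1) + b * (v.1 + v.2.1)) = 1 := by
    field_simp
  have key := hφ.2 htu htv hθ0 hμ0 hsum
  simp only [smul_eq_mul] at key
  rw [Fp_eq hsw, Fp_eq hsu0, Fp_eq hsv0, h1, h2, h3]
  rw [show (a * u.1 + b * v.1) + (a * u.2.1 + b * v.2.1)
      = a * (u.1 + u.2.1) + b * (v.1 + v.2.1) by ring]
  have harg : (a * u.2.2 + b * v.2.2) / (a * (u.1 + u.2.1) + b * (v.1 + v.2.1))
      = a * (u.1 + u.2.1) / (a * (u.1 + u.2.1) + b * (v.1 + v.2.1)) * (u.2.2 / (u.1 + u.2.1))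
      + b * (v.1 + v.2.1) / (a * (u.1 + u.2.1) + b * (v.1 + v.2.1)) * (v.2.2 / (v.1 + v.2.1)) := by
    field_simp
  rw [harg]
  have hmul := mul_le_mul_of_nonneg_left key hS.le
  have heq : a * ((u.1 + u.2.1) * phi p (u.2.2 / (u.1 + u.2.1)))
      + b * ((v.1 + v.2.1) * phi p (v.2.2 / (v.1 + v.2.1)))
      = (a * (u.1 + u.2.1) + b * (v.1 + v.2.1)) *
        (a * (u.1 + u.2.1) / (a * (u.1 + u.2.1) + b * (v.1 + v.2.1)) * phi p (u.2.2 / (u.1 + u.2.1))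
        + b * (v.1 + v.2.1) / (a * (u.1 + u.2.1) + b * (v.1 + v.2.1)) * phi p (v.2.2 / (v.1 + v.2.1))) := by
    field_simp
  linarith [hmul, heq]


/-- `F_p` is concave on `Ω` for `p ∈ (0,1] ∪ [2,∞)`, and convex on `Ω` for
`p ∈ (-∞,0) ∪ (1,2)`. -/
theorem statement18 (p : ℝ)
    (Ω : Set (ℝ × ℝ × ℝ))
    (hΩ : Ω = {u : ℝ × ℝ × ℝ |
      0 ≤ u.1 ∧ 0 ≤ u.2.1 ∧ 0 ≤ u.2.2 ∧ u.2.2 ≤ Real.sqrt (u.1 * u.2.1)}) :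
    (p ∈ Set.Ioc (0 : ℝ) 1 ∪ Set.Ici (2 : ℝ) → ConcaveOn ℝ Ω (Fp p)) ∧
    (p ∈ Set.Iio (0 : ℝ) ∪ Set.Ioo (1 : ℝ) 2 → ConvexOn ℝ Ω (Fp p)) := by
  subst hΩ
  constructor
  · intro hp
    exact main_concave (phi_concaveOn hp)
  · intro hp
    exact main_convex (phi_convexOn hp)
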